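/- Fix 0 < β ≤ log 4 and set K_c^{(2)}(β) := 1/(4βe^{−β}) + 1/(2β) (equivalently K_c^{(2)}(β) = 1/(2β c_β''(0))). Then: (a) for every 0 < K ≤ K_c^{(2)}(β), Ẽ_{β,K} = {0}; (b) for every K > K_c^{(2)}(β) there exists a number z̃(β,K) > 0 such that Ẽ_{β,K} = {z̃(β,K), −z̃(β,K)}; (c) the function K ↦ z̃(β,K) is strictly increasing and continuous on (K_c^{(2)}(β), ∞), and z̃(β,K) → 0 as K → K_c^{(2)}(β)⁺. -/

import Mathlib

noncomputable section

/-- `c_β(t) = log[(1 + e^{−β}(e^t + e^{−t}))/(1 + 2e^{−β})]`. -/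
def cBeta (β t : ℝ) : ℝ :=
  Real.log ((1 + Real.exp (-β) * (Real.exp t + Real.exp (-t))) / (1 + 2 * Real.exp (-β)))

/-- `J_β(z) = sup_{t ∈ ℝ} {t z − c_β(t)}`, the Legendre–Fenchel transform of `c_β`
(finite on `[-1,1]`, where it is used below). -/
def Jbeta (β z : ℝ) : ℝ := ⨆ t : ℝ, (t * z - cBeta β t)

/-- `Ẽ_{β,K}`: the set of `z ∈ [-1,1]` minimizing `J_β(z) − βK z²` over `[-1,1]`. -/
def tildeE (β K : ℝ) : Set ℝ :=
  {z | z ∈ Set.Icc (-1 : ℝ) 1 ∧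
    ∀ y ∈ Set.Icc (-1 : ℝ) 1, Jbeta β z - β * K * z ^ 2 ≤ Jbeta β y - β * K * y ^ 2}

/-- The second-order critical value `K_c^{(2)}(β) = 1/(4βe^{−β}) + 1/(2β)`. -/
def Kc2 (β : ℝ) : ℝ := 1 / (4 * β * Real.exp (-β)) + 1 / (2 * β)

namespace CWhelp

def Nb (β t : ℝ) : ℝ := 1 + Real.exp (-β) * (Real.exp t + Real.exp (-t))
def phi (β t : ℝ) : ℝ := Real.exp (-β) * (Real.exp t - Real.exp (-t)) / Nb β t
def phiD (β t : ℝ) : ℝ :=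
  (Real.exp (-β) * (Real.exp t + Real.exp (-t)) + 4 * Real.exp (-β) ^ 2) / (Nb β t) ^ 2

lemma expmul (t : ℝ) : Real.exp t * Real.exp (-t) = 1 := by
  rw [← Real.exp_add]; simp

lemma Nb_pos (β t : ℝ) : 0 < Nb β t := by
  have := Real.exp_pos (-β); have := Real.exp_pos t; have := Real.exp_pos (-t)
  unfold Nb; positivity

lemma hasDerivAt_Nb (β t : ℝ) :
    HasDerivAt (Nb β) (Real.exp (-β) * (Real.exp t - Real.exp (-t))) t := by
  have h1 : HasDerivAt (fun t : ℝ => Real.exp t) (Real.exp t) t := Real.hasDerivAt_exp t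
  have h2 : HasDerivAt (fun t : ℝ => Real.exp (-t)) (-Real.exp (-t)) t := by
    exact ((Real.hasDerivAt_exp (-t)).comp t (hasDerivAt_neg t)).congr_deriv (by ring)
  have := ((h1.add h2).const_mul (Real.exp (-β))).const_add 1
  unfold Nb
  exact this.congr_deriv (by ring)

lemma cBeta_eq (β t : ℝ) : cBeta β t = Real.log (Nb β t) - Real.log (Nb β 0) := by
  unfold cBeta Nb
  rw [Real.log_div (by have := Nb_pos β t; unfold Nb at this; linarith)
    (by have := Nb_pos β 0; unfold Nb at this; simp at this ⊢; linarith)]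
  norm_num
  ring_nf

lemma hasDerivAt_cBeta (β t : ℝ) : HasDerivAt (cBeta β) (phi β t) t := by
  have : cBeta β = fun t => Real.log (Nb β t) - Real.log (Nb β 0) := funext (cBeta_eq β)
  rw [this]
  exact ((hasDerivAt_Nb β t).log (Nb_pos β t).ne').sub_const _

lemma hasDerivAt_phi (β t : ℝ) : HasDerivAt (phi β) (phiD β t) t := by
  have h1 : HasDerivAt (fun t : ℝ => Real.exp t) (Real.exp t) t := Real.hasDerivAt_exp t
  have h2 : HasDerivAt (fun t : ℝ => Real.exp (-t)) (-Real.exp (-t)) t := by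
    exact ((Real.hasDerivAt_exp (-t)).comp t (hasDerivAt_neg t)).congr_deriv (by ring)
  have hnum : HasDerivAt (fun t : ℝ => Real.exp (-β) * (Real.exp t - Real.exp (-t)))
      (Real.exp (-β) * (Real.exp t + Real.exp (-t))) t := by
    simpa [mul_sub, sub_neg_eq_add, mul_add] using ((h1.sub h2).const_mul (Real.exp (-β)))
  have := hnum.div (hasDerivAt_Nb β t) (Nb_pos β t).ne'
  refine this.congr_deriv (Eq.symm ?_)
  have h := expmul t
  unfold phiD Nb
  field_simp
  ring_nf
  nlinarith [h, Real.exp_pos t, Real.exp_pos (-t), Real.exp_pos (-β)]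

end CWhelp

namespace CWhelp

lemma phi_zero (β : ℝ) : phi β 0 = 0 := by simp [phi]

lemma phi_odd (β t : ℝ) : phi β (-t) = - phi β t := by
  unfold phi Nb; rw [neg_neg]; ring

lemma cBeta_even (β t : ℝ) : cBeta β (-t) = cBeta β t := by
  unfold cBeta; rw [neg_neg]; ring_nf

lemma phi_lt_one (β t : ℝ) : phi β t < 1 := by
  rw [phi, div_lt_one (Nb_pos β t)]
  have := Real.exp_pos (-t); have := Real.exp_pos (-β)
  unfold Nb; nlinarith

lemma neg_one_lt_phi (β t : ℝ) : -1 < phi β t := by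
  rw [phi, lt_div_iff₀ (Nb_pos β t)]
  have := Real.exp_pos t; have := Real.exp_pos (-β)
  unfold Nb; nlinarith

lemma phi_pos (β : ℝ) {t : ℝ} (ht : 0 < t) : 0 < phi β t := by
  apply div_pos _ (Nb_pos β t)
  have : Real.exp (-t) < Real.exp t := Real.exp_lt_exp.2 (by linarith)
  have := Real.exp_pos (-β)
  nlinarith

lemma phiD_pos (β t : ℝ) : 0 < phiD β t := by
  have := Real.exp_pos t; have := Real.exp_pos (-t); have := Real.exp_pos (-β)
  have := Nb_pos β t
  unfold phiD; positivity

lemma phi_strictMono (β : ℝ) : StrictMono (phi β) := by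
  apply strictMono_of_deriv_pos
  intro x
  rw [(hasDerivAt_phi β x).deriv]
  exact phiD_pos β x

lemma phi_continuous (β : ℝ) : Continuous (phi β) := by
  have : Differentiable ℝ (phi β) := fun x => (hasDerivAt_phi β x).differentiableAt
  exact this.continuous

/-- helper: f 0 = 0, f' > 0 on positives ⟹ f > 0 on positives -/
lemma pos_on_pos {f f' : ℝ → ℝ} (hd : ∀ t, HasDerivAt f (f' t) t) (h0 : f 0 = 0)
    (hp : ∀ t, 0 < t → 0 < f' t) : ∀ t, 0 < t → 0 < f t := by
  intro t ht
  have hmono : StrictMonoOn f (Set.Ici 0) := by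
    apply strictMonoOn_of_deriv_pos (convex_Ici 0)
      (fun x _ => (hd x).continuousAt.continuousWithinAt)
    intro x hx
    rw [interior_Ici] at hx
    rw [(hd x).deriv]
    exact hp x hx
  have := hmono (Set.self_mem_Ici) (Set.mem_Ici.2 ht.le) ht
  linarith [h0 ▸ this]

section Ineq

variable (β : ℝ)

-- abbreviations
local notation "E" t => Real.exp t
local notation "A" => Real.exp (-β)

lemma hasDerivAt_exp_neg (t : ℝ) : HasDerivAt (fun t : ℝ => Real.exp (-t)) (-Real.exp (-t)) t := by
  exact ((Real.hasDerivAt_exp (-t)).comp t (hasDerivAt_neg t)).congr_deriv (by ring)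

/-- g1 t = t*(e^t+e^{-t}) - (e^t - e^{-t}) > 0 for t > 0 -/
lemma g1_pos : ∀ t, 0 < t →
    0 < t * (Real.exp t + Real.exp (-t)) - (Real.exp t - Real.exp (-t)) := by
  apply pos_on_pos (f' := fun t => t * (Real.exp t - Real.exp (-t)))
  · intro t
    have h1 := Real.hasDerivAt_exp t
    have h2 := hasDerivAt_exp_neg t
    have := ((hasDerivAt_id t).mul (h1.add h2)).sub (h1.sub h2)
    refine this.congr_deriv (Eq.symm ?_); simp only [id_eq, Pi.add_apply, Pi.sub_apply, Pi.mul_apply]; ring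
  · simp
  · intro t ht
    have : Real.exp (-t) < Real.exp t := Real.exp_lt_exp.2 (by linarith)
    nlinarith

/-- g3 t = (e^t - e^{-t}) - 2t > 0 for t > 0 -/
lemma g3_pos : ∀ t, 0 < t → 0 < (Real.exp t - Real.exp (-t)) - 2 * t := by
  apply pos_on_pos (f' := fun t => (Real.exp t + Real.exp (-t)) - 2)
  · intro t
    have h1 := Real.hasDerivAt_exp t
    have h2 := hasDerivAt_exp_neg t
    have := (h1.sub h2).sub ((hasDerivAt_id t).const_mul 2)
    refine this.congr_deriv (Eq.symm ?_); ring
  · simp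
  · intro t ht
    have h := expmul t
    have h1 : 1 < Real.exp t := by
      rw [show (1:ℝ) = Real.exp 0 by simp]; exact Real.exp_lt_exp.2 ht
    have := Real.exp_pos (-t)
    nlinarith [sq_nonneg (Real.exp t - 1)]

/-- g2 t = t*(e^t-e^{-t}) - 2*(e^t+e^{-t}) + 4 > 0 for t > 0 -/
lemma g2_pos : ∀ t, 0 < t →
    0 < t * (Real.exp t - Real.exp (-t)) - 2 * (Real.exp t + Real.exp (-t)) + 4 := by
  apply pos_on_pos (f' := fun t => t * (Real.exp t + Real.exp (-t)) - (Real.exp t - Real.exp (-t)))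
  · intro t
    have h1 := Real.hasDerivAt_exp t
    have h2 := hasDerivAt_exp_neg t
    have := (((hasDerivAt_id t).mul (h1.sub h2)).sub ((h1.add h2).const_mul 2)).add_const 4
    refine this.congr_deriv (Eq.symm ?_); simp only [id_eq, Pi.add_apply, Pi.sub_apply, Pi.mul_apply]; ring
  · norm_num
  · exact g1_pos

end Ineq

end CWhelp

namespace CWhelp

section Ineq2
variable {β : ℝ} (hβ0 : 0 < β) (hβ : β ≤ Real.log 4)

lemma quarter_le_A (hβ : β ≤ Real.log 4) : 1/4 ≤ Real.exp (-β) := by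
  have h4 : Real.exp (Real.log 4) = 4 := Real.exp_log (by norm_num)
  have : Real.exp (-Real.log 4) ≤ Real.exp (-β) := Real.exp_le_exp.2 (by linarith)
  rw [Real.exp_neg, h4] at this
  linarith

/-- V t = 2t(1 + A(e^t+e^{-t})) - (1+2A)(e^t-e^{-t}) > 0 for t > 0, when A ≥ 1/4 -/
lemma V_pos (hβ : β ≤ Real.log 4) : ∀ t, 0 < t →
    0 < 2*t*(1 + Real.exp (-β) * (Real.exp t + Real.exp (-t)))
      - (1 + 2*Real.exp (-β)) * (Real.exp t - Real.exp (-t)) := by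
  set A := Real.exp (-β) with hA
  have hA4 : 1/4 ≤ A := quarter_le_A hβ
  apply pos_on_pos
    (f' := fun t => 2 - (Real.exp t + Real.exp (-t)) + 2*A*t*(Real.exp t - Real.exp (-t)))
  · intro t
    have h1 := Real.hasDerivAt_exp t
    have h2 := hasDerivAt_exp_neg t
    have hid := hasDerivAt_id t
    have := (((hid.const_mul 2).mul ((((h1.add h2).const_mul A)).const_add 1)).sub
      ((h1.sub h2).const_mul (1 + 2*A)))
    refine this.congr_deriv (Eq.symm ?_); simp only [id_eq, Pi.add_apply, Pi.sub_apply, Pi.mul_apply]; ring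
  · norm_num
  · intro t ht
    have hg2 := g2_pos t ht
    have hS : 0 < Real.exp t - Real.exp (-t) := by
      have : Real.exp (-t) < Real.exp t := Real.exp_lt_exp.2 (by linarith)
      linarith
    nlinarith [mul_pos ht hS, mul_nonneg (by linarith : (0:ℝ) ≤ A - 1/4) (mul_pos ht hS).le]

/-- W t = S + A S C - t C - 4 A t > 0 for t>0, A ≥ 1/4;  S=e^t-e^{-t}, C=e^t+e^{-t} -/
lemma W_pos (hβ : β ≤ Real.log 4) : ∀ t, 0 < t →
    0 < (Real.exp t - Real.exp (-t))
      + Real.exp (-β) * ((Real.exp t - Real.exp (-t)) * (Real.exp t + Real.exp (-t)))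
      - t * (Real.exp t + Real.exp (-t)) - 4 * (Real.exp (-β) * t) := by
  set A := Real.exp (-β) with hA
  have hA4 : 1/4 ≤ A := quarter_le_A hβ
  apply pos_on_pos
    (f' := fun t => A * (2 * (Real.exp t - Real.exp (-t))^2 + 4 * Real.exp t * Real.exp (-t) - 4)
      - t * (Real.exp t - Real.exp (-t)))
  · intro t
    have h1 := Real.hasDerivAt_exp t
    have h2 := hasDerivAt_exp_neg t
    have hid := hasDerivAt_id t
    have := (((h1.sub h2).add ((((h1.sub h2).mul (h1.add h2))).const_mul A)).sub
      (hid.mul (h1.add h2))).sub ((hid.const_mul A).const_mul 4)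
    refine this.congr_deriv (Eq.symm ?_); simp only [id_eq, Pi.add_apply, Pi.sub_apply, Pi.mul_apply]; ring
  · norm_num
  · intro t ht
    have h := expmul t
    have hS : 0 < Real.exp t - Real.exp (-t) := by
      have : Real.exp (-t) < Real.exp t := Real.exp_lt_exp.2 (by linarith)
      linarith
    have hg3 := g3_pos t ht
    -- f' = A*2S² - tS  (since 4 e^t e^{-t} - 4 = 0) = S(2AS - t) ≥ S(S/2 - t) > 0
    nlinarith [mul_pos hS hg3]

/-- key inequality V: (1+2A) φ(t) < 2 A t for t > 0 -/
lemma keyV (hβ : β ≤ Real.log 4) {t : ℝ} (ht : 0 < t) :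
    (1 + 2*Real.exp (-β)) * phi β t < 2 * Real.exp (-β) * t := by
  have hV := V_pos hβ t ht
  have hN := Nb_pos β t
  have hA := Real.exp_pos (-β)
  rw [phi, show (1 + 2*Real.exp (-β)) * (Real.exp (-β) * (Real.exp t - Real.exp (-t)) / Nb β t)
      = ((1 + 2*Real.exp (-β)) * (Real.exp (-β) * (Real.exp t - Real.exp (-t)))) / Nb β t
      from by ring, div_lt_iff₀ hN]
  unfold Nb at *
  nlinarith [mul_pos hA hV]

/-- key inequality W: t * φ'(t) < φ(t) for t > 0 -/
lemma keyW (hβ : β ≤ Real.log 4) {t : ℝ} (ht : 0 < t) :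
    t * phiD β t < phi β t := by
  have hW := W_pos hβ t ht
  have hN := Nb_pos β t
  have hA := Real.exp_pos (-β)
  have h := expmul t
  rw [phi, phiD, show t * ((Real.exp (-β) * (Real.exp t + Real.exp (-t)) + 4 * Real.exp (-β) ^ 2) / (Nb β t) ^ 2)
      = (t * (Real.exp (-β) * (Real.exp t + Real.exp (-t)) + 4 * Real.exp (-β) ^ 2)) / (Nb β t) ^ 2
      from by ring, div_lt_div_iff₀ (by positivity) hN]
  unfold Nb at *
  nlinarith [mul_pos hN (mul_pos hA hW)]

end Ineq2
end CWhelp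

namespace CWhelp

def Jb (β z : ℝ) : ℝ := ⨆ t : ℝ, (t * z - cBeta β t)

/-- uniform upper bound for s*z - c(s), z ∈ [-1,1] -/
lemma J_bound (β : ℝ) {z : ℝ} (hz : z ∈ Set.Icc (-1:ℝ) 1) (s : ℝ) :
    s * z - cBeta β s ≤ β + Real.log (Nb β 0) := by
  obtain ⟨hz1, hz2⟩ := hz
  have hN0 : 0 < Nb β 0 := Nb_pos β 0
  have key : |s| - β - Real.log (Nb β 0) ≤ cBeta β s := by
    rw [cBeta_eq]
    have h1 : Real.exp (|s| - β) ≤ Nb β s := by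
      rcases abs_cases s with ⟨h, _⟩ | ⟨h, _⟩
      all_goals rw [h, sub_eq_add_neg, Real.exp_add]
      all_goals have := Real.exp_pos (-s); have := Real.exp_pos (-β); have := Real.exp_pos s
      all_goals unfold Nb; nlinarith
    have := Real.log_le_log (Real.exp_pos _) h1
    rw [Real.log_exp] at this
    linarith
  have hsz : s * z ≤ |s| := by
    calc s * z ≤ |s * z| := le_abs_self _
    _ = |s| * |z| := abs_mul s z
    _ ≤ |s| * 1 := by
        apply mul_le_mul_of_nonneg_left _ (abs_nonneg s)
        rw [abs_le]; exact ⟨hz1, hz2⟩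
    _ = |s| := mul_one _
  linarith

lemma J_bddAbove (β : ℝ) {z : ℝ} (hz : z ∈ Set.Icc (-1:ℝ) 1) :
    BddAbove (Set.range fun s => s * z - cBeta β s) := by
  refine ⟨β + Real.log (Nb β 0), ?_⟩
  rintro x ⟨s, rfl⟩
  exact J_bound β hz s

lemma J_ge (β : ℝ) {z : ℝ} (hz : z ∈ Set.Icc (-1:ℝ) 1) (t : ℝ) :
    t * z - cBeta β t ≤ Jb β z :=
  le_ciSup (J_bddAbove β hz) t

lemma phi_mem_Icc (β t : ℝ) : phi β t ∈ Set.Icc (-1:ℝ) 1 :=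
  ⟨(neg_one_lt_phi β t).le, (phi_lt_one β t).le⟩

/-- tangent-line bound: s φ(t) - c(s) ≤ t φ(t) - c(t) -/
lemma tangent (β t s : ℝ) : s * phi β t - cBeta β s ≤ t * phi β t - cBeta β t := by
  set g : ℝ → ℝ := fun s => cBeta β s - s * phi β t with hg
  have hd : ∀ x, HasDerivAt g (phi β x - phi β t) x := by
    intro x
    have := (hasDerivAt_cBeta β x).sub ((hasDerivAt_id x).mul_const (phi β t))
    refine this.congr_deriv (Eq.symm ?_)
    simp
  have key : g t ≤ g s := by
    rcases le_total s t with h | h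
    · have hanti : AntitoneOn g (Set.Iic t) := by
        apply antitoneOn_of_deriv_nonpos (convex_Iic t)
          (fun x _ => (hd x).continuousAt.continuousWithinAt)
          (fun x hx => (hd x).differentiableAt.differentiableWithinAt)
        intro x hx
        rw [interior_Iic] at hx
        rw [(hd x).deriv]
        have := (phi_strictMono β).le_iff_le.2 (le_of_lt hx)
        linarith [(phi_strictMono β).monotone (le_of_lt hx)]
      exact hanti (Set.mem_Iic.2 h) (Set.mem_Iic.2 le_rfl) h
    · have hmono : MonotoneOn g (Set.Ici t) := by
        apply monotoneOn_of_deriv_nonneg (convex_Ici t)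
          (fun x _ => (hd x).continuousAt.continuousWithinAt)
          (fun x hx => (hd x).differentiableAt.differentiableWithinAt)
        intro x hx
        rw [interior_Ici] at hx
        rw [(hd x).deriv]
        linarith [(phi_strictMono β).monotone (le_of_lt hx)]
      exact hmono (Set.mem_Ici.2 le_rfl) (Set.mem_Ici.2 h) h
  simp only [hg] at key
  linarith

lemma Jphi (β t : ℝ) : Jb β (phi β t) = t * phi β t - cBeta β t := by
  apply le_antisymm
  · exact ciSup_le (fun s => tangent β t s)
  · exact J_ge β (phi_mem_Icc β t) t

lemma cBeta_zero (β : ℝ) : cBeta β 0 = 0 := by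
  unfold cBeta
  have := Real.exp_pos (-β)
  rw [show (1 + Real.exp (-β) * (Real.exp 0 + Real.exp (-0))) / (1 + 2 * Real.exp (-β)) = 1 by
    simp only [Real.exp_zero, neg_zero]; field_simp; ring, Real.log_one]

end CWhelp

namespace CWhelp

def M (β K t : ℝ) : ℝ := t * phi β t - cBeta β t - β * K * (phi β t) ^ 2

lemma G_eq_M (β K t : ℝ) : Jb β (phi β t) - β * K * (phi β t) ^ 2 = M β K t := by
  rw [Jphi]; rfl

lemma hasDerivAt_M (β K t : ℝ) :
    HasDerivAt (M β K) (phiD β t * (t - 2 * β * K * phi β t)) t := by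
  have h1 := hasDerivAt_phi β t
  have h2 := hasDerivAt_cBeta β t
  have hid := hasDerivAt_id t
  have := ((hid.mul h1).sub h2).sub (((h1.pow 2)).const_mul (β * K))
  refine this.congr_deriv (Eq.symm ?_)
  simp only [id_eq]
  ring

lemma M_even (β K t : ℝ) : M β K (-t) = M β K t := by
  unfold M
  rw [phi_odd, cBeta_even]
  ring

lemma Kc2_eq (β : ℝ) (hβ0 : 0 < β) :
    2 * β * Kc2 β = (1 + 2 * Real.exp (-β)) / (2 * Real.exp (-β)) := by
  unfold Kc2
  have := Real.exp_pos (-β)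
  field_simp
  ring

lemma Kc2_pos (β : ℝ) (hβ0 : 0 < β) : 0 < Kc2 β := by
  unfold Kc2
  have := Real.exp_pos (-β)
  positivity

/-- for K ≤ Kc2 : 2βK φ(t) < t for t > 0 -/
lemma r_pos_of_le (β K : ℝ) (hβ0 : 0 < β) (hβ : β ≤ Real.log 4) (hK : K ≤ Kc2 β)
    {t : ℝ} (ht : 0 < t) : 2 * β * K * phi β t < t := by
  have hA := Real.exp_pos (-β)
  have hkv := keyV hβ ht
  have hp := phi_pos β ht
  have h1 : 2 * β * K * phi β t ≤ 2 * β * Kc2 β * phi β t := by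
    have : 2 * β * K ≤ 2 * β * Kc2 β := by nlinarith
    nlinarith
  rw [Kc2_eq β hβ0, div_mul_eq_mul_div] at h1
  have h2 : (1 + 2 * Real.exp (-β)) * phi β t / (2 * Real.exp (-β)) < t := by
    rw [div_lt_iff₀ (by positivity)]
    nlinarith
  linarith

/-- t/φ(t) strictly increasing (cross-multiplied form): 0 < s < t → φ(t) s < φ(s) t -/
lemma cross (β : ℝ) (hβ : β ≤ Real.log 4) {s t : ℝ} (hs : 0 < s) (hst : s < t) :
    phi β t * s < phi β s * t := by
  have hanti : StrictAntiOn (fun x => phi β x / x) (Set.Ioi 0) := by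
    apply strictAntiOn_of_deriv_neg (convex_Ioi 0)
    · apply ContinuousOn.div (phi_continuous β).continuousOn continuousOn_id
      intro x hx
      exact (ne_of_gt hx)
    · intro x hx
      rw [interior_Ioi] at hx
      have hx0 : (0:ℝ) < x := hx
      have hd : HasDerivAt (fun x => phi β x / x) ((phiD β x * x - phi β x * 1) / x ^ 2) x :=
        (hasDerivAt_phi β x).div (hasDerivAt_id x) (ne_of_gt hx0)
      rw [hd.deriv]
      have := keyW hβ hx0
      apply div_neg_of_neg_of_pos
      · nlinarith
      · positivity
  have := hanti (Set.mem_Ioi.2 hs) (Set.mem_Ioi.2 (hs.trans hst)) hst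
  rw [div_lt_div_iff₀ (hs.trans hst) hs] at this
  linarith

/-- for each t > 0, K(t) := t/(2βφ(t)) exceeds Kc2 -/
lemma Kof_gt (β : ℝ) (hβ0 : 0 < β) (hβ : β ≤ Real.log 4) {t : ℝ} (ht : 0 < t) :
    Kc2 β < t / (2 * β * phi β t) := by
  have hp := phi_pos β ht
  have hkv := keyV hβ ht
  have hA := Real.exp_pos (-β)
  rw [lt_div_iff₀ (by positivity)]
  have h2 : 2 * β * Kc2 β = (1 + 2 * Real.exp (-β)) / (2 * Real.exp (-β)) := Kc2_eq β hβ0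
  have : Kc2 β * (2 * β * phi β t) = (2 * β * Kc2 β) * phi β t := by ring
  rw [this, h2, div_mul_eq_mul_div, div_lt_iff₀ (by positivity)]
  nlinarith

/-- the fixed-point equation: roots are unique -/
lemma root_unique (β K : ℝ) (hβ0 : 0 < β) (hβ : β ≤ Real.log 4)
    {s t : ℝ} (hs : 0 < s) (ht : 0 < t)
    (es : s = 2 * β * K * phi β s) (et : t = 2 * β * K * phi β t) : s = t := by
  by_contra hne
  rcases lt_or_gt_of_ne hne with h | h
  · have := cross β hβ hs h
    nlinarith [phi_pos β hs, phi_pos β ht]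
  · have := cross β hβ ht h
    nlinarith [phi_pos β hs, phi_pos β ht]

end CWhelp

namespace CWhelp

lemma phi_tendsto_atTop (β : ℝ) : Filter.Tendsto (phi β) Filter.atTop (nhds 1) := by
  have hA := Real.exp_pos (-β)
  have heq : ∀ t : ℝ, phi β t =
      Real.exp (-β) * (1 - Real.exp (-t) ^ 2) /
        (Real.exp (-t) + Real.exp (-β) * (1 + Real.exp (-t) ^ 2)) := by
    intro t
    have h := expmul t
    have hF := Real.exp_pos (-t)
    rw [phi, div_eq_div_iff (Nb_pos β t).ne' (by positivity)]
    unfold Nb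
    linear_combination (2*Real.exp (-β)^2*Real.exp (-t) + Real.exp (-β)) * h
  rw [show (1:ℝ) = Real.exp (-β) * (1 - 0 ^ 2) / (0 + Real.exp (-β) * (1 + 0 ^ 2)) by
    field_simp; ring]
  apply Filter.Tendsto.congr (fun t => (heq t).symm)
  have hF : Filter.Tendsto (fun t : ℝ => Real.exp (-t)) Filter.atTop (nhds 0) := by
    exact Real.tendsto_exp_neg_atTop_nhds_zero
  apply Filter.Tendsto.div
  · exact (tendsto_const_nhds.mul (tendsto_const_nhds.sub (hF.pow 2)))
  · exact (hF.add (tendsto_const_nhds.mul (tendsto_const_nhds.add (hF.pow 2))))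
  · positivity

lemma phi_surj (β : ℝ) {z : ℝ} (hz : z ∈ Set.Ioo (-1:ℝ) 1) : ∃ t, phi β t = z := by
  obtain ⟨hz1, hz2⟩ := hz
  obtain ⟨b, hb⟩ := ((phi_tendsto_atTop β).eventually_const_lt hz2).exists
  obtain ⟨b', hb'⟩ := ((phi_tendsto_atTop β).eventually_const_lt
    (show -z < 1 by linarith)).exists
  have ha : phi β (-b') < z := by
    rw [phi_odd]; linarith
  have : z ∈ Set.Icc (phi β (-b')) (phi β b) := ⟨ha.le, hb.le⟩
  obtain ⟨t, ht⟩ := intermediate_value_univ (-b') b (phi_continuous β) this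
  exact ⟨t, ht⟩

lemma exists_root (β K : ℝ) (hβ0 : 0 < β) (hβ : β ≤ Real.log 4) (hK : Kc2 β < K) :
    ∃ t, 0 < t ∧ t = 2 * β * K * phi β t := by
  have hA := Real.exp_pos (-β)
  have hK0 : 0 < K := (Kc2_pos β hβ0).trans hK
  have hphiD0 : phiD β 0 = 2 * Real.exp (-β) / (1 + 2 * Real.exp (-β)) := by
    unfold phiD Nb
    simp only [Real.exp_zero, neg_zero]
    rw [div_eq_div_iff (by positivity) (by positivity)]
    ring
  have hgt : 1 < 2 * β * K * phiD β 0 := by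
    rw [hphiD0]
    have h1 : (1 + 2*Real.exp (-β)) / (2*Real.exp (-β)) < 2 * β * K := by
      rw [← Kc2_eq β hβ0]
      nlinarith
    rw [div_lt_iff₀ (by positivity)] at h1
    rw [show 2*β*K*(2*Real.exp (-β)/(1+2*Real.exp (-β)))
        = (2*β*K*(2*Real.exp (-β)))/(1+2*Real.exp (-β)) from by ring,
      lt_div_iff₀ (by positivity)]
    linarith
  -- slope convergence
  have hslope : Filter.Tendsto (fun t => phi β t / t) (nhdsWithin 0 (Set.Ioi 0))
      (nhds (phiD β 0)) := by
    have h := hasDerivAt_iff_tendsto_slope.mp (hasDerivAt_phi β 0)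
    have h2 := h.mono_left (nhdsWithin_mono 0 (by
      intro x hx
      simp only [Set.mem_compl_iff, Set.mem_singleton_iff]
      exact (ne_of_gt hx)))
    apply h2.congr'
    filter_upwards [self_mem_nhdsWithin] with t ht
    rw [slope_def_field, phi_zero]
    simp
  have hev1 : ∀ᶠ t in nhdsWithin 0 (Set.Ioi 0), 1 < 2 * β * K * (phi β t / t) := by
    have := (hslope.const_mul (2*β*K)).eventually_const_lt hgt
    exact this
  have hev2 : ∀ᶠ t in nhdsWithin (0:ℝ) (Set.Ioi 0), 0 < t := self_mem_nhdsWithin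
  have hev3 : ∀ᶠ t in nhdsWithin (0:ℝ) (Set.Ioi 0), t < 1 :=
    mem_nhdsWithin_of_mem_nhds (Iio_mem_nhds (by norm_num))
  obtain ⟨t₀, ht₀⟩ := (hev1.and (hev2.and hev3)).exists
  obtain ⟨hs₀, ht₀pos, ht₀lt⟩ := ht₀
  -- at t₀ : t₀ < 2βK φ(t₀)
  have hroot0 : t₀ < 2 * β * K * phi β t₀ := by
    rw [mul_div_assoc'] at hs₀
    rw [lt_div_iff₀ ht₀pos] at hs₀
    linarith
  -- at T := 2βK + 1 : f T < 0
  set T : ℝ := 2 * β * K + 1 with hT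
  have hTroot : 2 * β * K * phi β T < T := by
    have h1 := phi_lt_one β T
    have h2 : (0:ℝ) < 2 * β * K := by positivity
    nlinarith [mul_pos h2 (sub_pos.2 h1)]
  have hcont : ContinuousOn (fun t => 2 * β * K * phi β t - t) (Set.Icc t₀ T) :=
    ((continuous_const.mul (phi_continuous β)).sub continuous_id).continuousOn
  have hle : t₀ ≤ T := by nlinarith
  have := intermediate_value_Icc' hle hcont
  have h0mem : (0:ℝ) ∈ Set.Icc (2 * β * K * phi β T - T) (2 * β * K * phi β t₀ - t₀) :=
    ⟨by linarith, by linarith⟩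
  obtain ⟨x, hx, hfx⟩ := this h0mem
  refine ⟨x, lt_of_lt_of_le ht₀pos hx.1, ?_⟩
  simp only at hfx
  linarith

end CWhelp

namespace CWhelp

lemma M_contOn (β K : ℝ) (s : Set ℝ) : ContinuousOn (M β K) s :=
  fun x _ => ((hasDerivAt_M β K x).continuousAt).continuousWithinAt

/-- K ≤ Kc2 : M strictly increasing on [0,∞) -/
lemma M_mono_le (β K : ℝ) (hβ0 : 0 < β) (hβ : β ≤ Real.log 4) (hK : K ≤ Kc2 β) :
    StrictMonoOn (M β K) (Set.Ici 0) := by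
  apply strictMonoOn_of_deriv_pos (convex_Ici 0) (M_contOn β K _)
  intro x hx
  rw [interior_Ici] at hx
  rw [(hasDerivAt_M β K x).deriv]
  have h1 := phiD_pos β x
  have h2 := r_pos_of_le β K hβ0 hβ hK hx
  nlinarith

/-- K > Kc2, t* root : M strictly decreasing on [0,t*] -/
lemma M_anti_root (β K : ℝ) (hβ0 : 0 < β) (hβ : β ≤ Real.log 4)
    {ts : ℝ} (hts : 0 < ts) (hroot : ts = 2 * β * K * phi β ts) :
    StrictAntiOn (M β K) (Set.Icc 0 ts) := by
  apply strictAntiOn_of_deriv_neg (convex_Icc 0 ts) (M_contOn β K _)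
  intro x hx
  rw [interior_Icc] at hx
  obtain ⟨hx0, hxts⟩ := hx
  rw [(hasDerivAt_M β K x).deriv]
  have h1 := phiD_pos β x
  have hc := cross β hβ hx0 hxts
  have hps := phi_pos β hts
  have hpx := phi_pos β hx0
  -- φ(t*) x < φ(x) t* = φ(x)·2βK·φ(t*)  ⟹ x < 2βKφ(x)
  have hc' : phi β ts * x < phi β x * (2 * β * K * phi β ts) := by
    rw [← hroot]; exact hc
  have h2 : x < 2 * β * K * phi β x := by nlinarith [hc', hps]
  nlinarith

/-- K > Kc2, t* root : M strictly increasing on [t*,∞) -/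
lemma M_mono_root (β K : ℝ) (hβ0 : 0 < β) (hβ : β ≤ Real.log 4)
    {ts : ℝ} (hts : 0 < ts) (hroot : ts = 2 * β * K * phi β ts) :
    StrictMonoOn (M β K) (Set.Ici ts) := by
  apply strictMonoOn_of_deriv_pos (convex_Ici ts) (M_contOn β K _)
  intro x hx
  rw [interior_Ici] at hx
  rw [(hasDerivAt_M β K x).deriv]
  have h1 := phiD_pos β x
  have hc := cross β hβ hts hx
  have hps := phi_pos β hts
  have hpx := phi_pos β (hts.trans hx)
  have hc' : phi β x * (2 * β * K * phi β ts) < phi β ts * x := by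
    rw [← hroot]; exact hc
  have h2 : 2 * β * K * phi β x < x := by nlinarith [hc', hps]
  nlinarith

/-- endpoints z = ±1 are never minimizers -/
lemma endpoint_gt (β K : ℝ) (hβ0 : 0 < β) (hK0 : 0 < K) {z : ℝ} (hz : z = 1 ∨ z = -1) :
    M β K (2*β*K + 1) < Jb β z - β * K * z ^ 2 := by
  set T : ℝ := 2*β*K + 1 with hT
  have hJ : T - cBeta β T ≤ Jb β z := by
    rcases hz with rfl | rfl
    · have := J_ge β (Set.mem_Icc.2 ⟨by norm_num, le_rfl⟩) T
      simpa using this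
    · have := J_ge β (Set.mem_Icc.2 ⟨le_rfl, by norm_num⟩) (-T)
      rw [cBeta_even] at this
      calc T - cBeta β T = -T * (-1) - cBeta β T := by ring
      _ ≤ Jb β (-1) := this
  have hz2 : z ^ 2 = 1 := by rcases hz with rfl | rfl <;> norm_num
  rw [hz2]
  have h1 := phi_lt_one β T
  have h2 := neg_one_lt_phi β T
  have hβK : 0 < β * K := by positivity
  -- M K T = TφT - cT - βKφT²;  (T - cT - βK) - M K T = (1-φT)(T - βK(1+φT)) > 0
  have key : M β K T < T - cBeta β T - β * K := by
    unfold M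
    nlinarith [mul_pos (sub_pos.2 h1) (show (0:ℝ) < T - β*K*(1 + phi β T) by nlinarith)]
  linarith

end CWhelp

namespace CWhelp

end CWhelp

open CWhelp

/-- Fix `0 < β ≤ log 4`.  (a) For `0 < K ≤ K_c^{(2)}(β)`,
`Ẽ_{β,K} = {0}`.  (b) For `K > K_c^{(2)}(β)`, `Ẽ_{β,K} = {z̃(β,K), −z̃(β,K)}` with
`z̃(β,K) > 0`.  (c) `K ↦ z̃(β,K)` is strictly increasing and continuous on
`(K_c^{(2)}(β), ∞)`, and `z̃(β,K) → 0` as `K → K_c^{(2)}(β)⁺`. -/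
theorem tildeE_structure_second_order (β : ℝ) (hβ0 : 0 < β) (hβ : β ≤ Real.log 4) :
    (∀ K : ℝ, 0 < K → K ≤ Kc2 β → tildeE β K = {0}) ∧
    ∃ ztilde : ℝ → ℝ,
      (∀ K : ℝ, Kc2 β < K → 0 < ztilde K ∧ tildeE β K = {ztilde K, -ztilde K}) ∧
      StrictMonoOn ztilde (Set.Ioi (Kc2 β)) ∧
      ContinuousOn ztilde (Set.Ioi (Kc2 β)) ∧
      Filter.Tendsto ztilde (nhdsWithin (Kc2 β) (Set.Ioi (Kc2 β))) (nhds 0) := by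
  have hJb : ∀ z, Jbeta β z = Jb β z := fun z => rfl
  have hG : ∀ K t, Jbeta β (phi β t) - β * K * (phi β t) ^ 2 = M β K t := by
    intro K t; rw [hJb]; exact G_eq_M β K t
  have hG0 : ∀ K : ℝ, Jbeta β 0 - β * K * 0 ^ 2 = M β K 0 := by
    intro K
    have := hG K 0
    rw [phi_zero] at this
    exact this
  have hicc0 : (0:ℝ) ∈ Set.Icc (-1:ℝ) 1 := ⟨by norm_num, by norm_num⟩
  constructor
  · -- part (a)
    intro K hK0 hKc
    have hM := M_mono_le β K hβ0 hβ hKc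
    set T : ℝ := 2*β*K + 1 with hTdef
    have hT0 : 0 < T := by positivity
    have hMT : M β K 0 < M β K T := hM Set.self_mem_Ici (Set.mem_Ici.2 hT0.le) hT0
    -- strict minimality of 0
    have hmin : ∀ y ∈ Set.Icc (-1:ℝ) 1, y ≠ 0 →
        Jbeta β 0 - β * K * 0 ^ 2 < Jbeta β y - β * K * y ^ 2 := by
      intro y hy hy0
      rw [hG0]
      rcases eq_or_lt_of_le hy.2 with h1 | h1
      · have := endpoint_gt β K hβ0 hK0 (Or.inl h1)
        rw [← hJb] at this
        linarith
      rcases eq_or_lt_of_le hy.1 with h2 | h2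
      · have := endpoint_gt β K hβ0 hK0 (Or.inr h2.symm)
        rw [← hJb] at this
        linarith
      · obtain ⟨t, ht⟩ := phi_surj β ⟨h2, h1⟩
        have ht0 : t ≠ 0 := by
          intro h; rw [h, phi_zero] at ht; exact hy0 ht.symm
        rw [← ht, hG]
        rcases lt_or_gt_of_ne ht0 with h | h
        · have : M β K 0 < M β K (-t) :=
            hM Set.self_mem_Ici (Set.mem_Ici.2 (by linarith)) (by linarith)
          rw [M_even] at this
          exact this
        · exact hM Set.self_mem_Ici (Set.mem_Ici.2 h.le) h
    ext z
    simp only [tildeE, Set.mem_setOf_eq, Set.mem_singleton_iff]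
    constructor
    · rintro ⟨hzI, hzmin⟩
      by_contra hz0
      have h1 := hmin z hzI hz0
      have h2 := hzmin 0 hicc0
      linarith
    · rintro rfl
      refine ⟨hicc0, fun y hy => ?_⟩
      rcases eq_or_ne y 0 with rfl | hy0
      · exact le_rfl
      · exact (hmin y hy hy0).le
  · -- part (b)
    have hex : ∀ K : ℝ, ∃ t : ℝ, Kc2 β < K → (0 < t ∧ t = 2*β*K*phi β t) := by
      intro K
      by_cases hK : Kc2 β < K
      · obtain ⟨t, ht1, ht2⟩ := exists_root β K hβ0 hβ hK
        exact ⟨t, fun _ => ⟨ht1, ht2⟩⟩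
      · exact ⟨0, fun h => absurd h hK⟩
    choose ts hts using hex
    have hts_pos : ∀ K, Kc2 β < K → 0 < ts K := fun K h => (hts K h).1
    have hts_eq : ∀ K, Kc2 β < K → ts K = 2*β*K*phi β (ts K) := fun K h => (hts K h).2
    have hts_mono : ∀ K1 K2, Kc2 β < K1 → K1 < K2 → ts K1 < ts K2 := by
      intro K1 K2 h1 h12
      have h2 : Kc2 β < K2 := h1.trans h12
      have e1 := hts_eq K1 h1
      have e2 := hts_eq K2 h2
      have p1 := hts_pos K1 h1
      have p2 := hts_pos K2 h2
      have hφ1 := phi_pos β p1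
      have hφ2 := phi_pos β p2
      rcases lt_trichotomy (ts K1) (ts K2) with h | h | h
      · exact h
      · exfalso
        rw [← h] at e2
        nlinarith [mul_pos (mul_pos hβ0 hφ1) (sub_pos.2 h12)]
      · exfalso
        have hc := cross β hβ p2 h
        have hc' : phi β (ts K1) * (2*β*K2*phi β (ts K2))
            < phi β (ts K2) * (2*β*K1*phi β (ts K1)) := by
          rw [← e1, ← e2]; exact hc
        nlinarith [mul_pos (mul_pos hβ0 (mul_pos hφ1 hφ2)) (sub_pos.2 h12)]
    have hKof : ∀ t : ℝ, 0 < t →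
        Kc2 β < t/(2*β*phi β t) ∧ ts (t/(2*β*phi β t)) = t := by
      intro t ht
      have h1 := Kof_gt β hβ0 hβ ht
      have hφ := phi_pos β ht
      have heq : t = 2*β*(t/(2*β*phi β t))*phi β t := by
        field_simp
      exact ⟨h1, root_unique β _ hβ0 hβ (hts_pos _ h1) ht (hts_eq _ h1) heq⟩
    refine ⟨fun K => phi β (ts K), ?_, ?_, ?_, ?_⟩
    · -- structure of tildeE for K > Kc2
      intro K hK
      have hK0 : 0 < K := (Kc2_pos β hβ0).trans hK
      have p := hts_pos K hK
      have e := hts_eq K hK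
      refine ⟨phi_pos β p, ?_⟩
      have hanti := M_anti_root β K hβ0 hβ p e
      have hmono := M_mono_root β K hβ0 hβ p e
      set T : ℝ := 2*β*K + 1 with hTdef
      have hφT := phi_lt_one β (ts K)
      have htsT : ts K < T := by
        have h1 := phi_lt_one β (ts K)
        nlinarith [mul_pos (show (0:ℝ) < 2*β*K by positivity) (sub_pos.2 h1)]
      have hMT : M β K (ts K) < M β K T :=
        hmono Set.self_mem_Ici (Set.mem_Ici.2 htsT.le) htsT
      have hMlt : ∀ s : ℝ, s ≠ ts K → s ≠ -ts K → M β K (ts K) < M β K s := by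
        have hpos : ∀ s : ℝ, 0 ≤ s → s ≠ ts K → M β K (ts K) < M β K s := by
          intro s hs0 hs1
          rcases lt_or_gt_of_ne hs1 with h | h
          · exact hanti (Set.mem_Icc.2 ⟨hs0, h.le⟩) (Set.mem_Icc.2 ⟨p.le, le_rfl⟩) h
          · exact hmono (Set.mem_Ici.2 le_rfl) (Set.mem_Ici.2 h.le) h
        intro s hs1 hs2
        rcases le_or_gt 0 s with h | h
        · exact hpos s h hs1
        · have h1 : M β K s = M β K (-s) := by rw [M_even]
          rw [h1]
          apply hpos (-s) (by linarith)
          intro hc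
          exact hs2 (by linarith)
      have hMle : ∀ s : ℝ, M β K (ts K) ≤ M β K s := by
        intro s
        rcases eq_or_ne s (ts K) with rfl | h1
        · exact le_rfl
        rcases eq_or_ne s (-ts K) with rfl | h2
        · rw [M_even]
        · exact (hMlt s h1 h2).le
      -- minimality of both points
      have hminz : ∀ y ∈ Set.Icc (-1:ℝ) 1,
          M β K (ts K) ≤ Jbeta β y - β * K * y ^ 2 := by
        intro y hy
        rcases eq_or_lt_of_le hy.2 with h1 | h1
        · have := endpoint_gt β K hβ0 hK0 (Or.inl h1)
          rw [← hJb] at this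
          linarith
        rcases eq_or_lt_of_le hy.1 with h2 | h2
        · have := endpoint_gt β K hβ0 hK0 (Or.inr h2.symm)
          rw [← hJb] at this
          linarith
        · obtain ⟨t, ht⟩ := phi_surj β ⟨h2, h1⟩
          rw [← ht, hG]
          exact hMle t
      ext z
      simp only [tildeE, Set.mem_setOf_eq, Set.mem_insert_iff, Set.mem_singleton_iff]
      constructor
      · rintro ⟨hzI, hzmin⟩
        by_contra hcon
        push_neg at hcon
        obtain ⟨hc1, hc2⟩ := hcon
        have hzmin' := hzmin (phi β (ts K)) (phi_mem_Icc β (ts K))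
        rw [hG] at hzmin'
        rcases eq_or_lt_of_le hzI.2 with h1 | h1
        · have := endpoint_gt β K hβ0 hK0 (Or.inl h1)
          rw [← hJb] at this
          linarith
        rcases eq_or_lt_of_le hzI.1 with h2 | h2
        · have := endpoint_gt β K hβ0 hK0 (Or.inr h2.symm)
          rw [← hJb] at this
          linarith
        · obtain ⟨t, ht⟩ := phi_surj β ⟨h2, h1⟩
          have ht1 : t ≠ ts K := by
            intro hc; apply hc1; rw [← ht, hc]
          have ht2 : t ≠ -ts K := by
            intro hc
            apply hc2
            rw [← ht, hc, phi_odd]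
          have := hMlt t ht1 ht2
          rw [← ht, hG] at hzmin'
          linarith
      · intro hz
        rcases hz with rfl | rfl
        · refine ⟨phi_mem_Icc β (ts K), fun y hy => ?_⟩
          rw [hG]
          exact hminz y hy
        · have hzeq : -phi β (ts K) = phi β (-ts K) := (phi_odd β (ts K)).symm
          rw [hzeq]
          refine ⟨phi_mem_Icc β (-ts K), fun y hy => ?_⟩
          rw [hG, M_even]
          exact hminz y hy
    · -- strict monotonicity
      intro K1 h1 K2 h2 h12
      exact phi_strictMono β (hts_mono K1 K2 h1 h12)
    · -- continuity
      have hcts : ContinuousOn ts (Set.Ioi (Kc2 β)) := by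
        intro K0 hK0
        have hK0' : Kc2 β < K0 := hK0
        apply tendsto_order.2
        constructor
        · intro b hb
          rcases le_or_gt b 0 with hb0 | hb0
          · filter_upwards [self_mem_nhdsWithin] with K hK
            exact lt_of_le_of_lt hb0 (hts_pos K hK)
          · obtain ⟨hKb1, hKb2⟩ := hKof b hb0
            have hKbK0 : b/(2*β*phi β b) < K0 := by
              rcases lt_trichotomy (b/(2*β*phi β b)) K0 with h | h | h
              · exact h
              · exfalso; rw [← h, hKb2] at hb; exact lt_irrefl b hb
              · exfalso
                have := hts_mono K0 _ hK0' h
                rw [hKb2] at this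
                linarith
            filter_upwards [mem_nhdsWithin_of_mem_nhds (Ioi_mem_nhds hKbK0),
              self_mem_nhdsWithin] with K hK1 hK2
            have := hts_mono _ K hKb1 hK1
            rw [hKb2] at this
            exact this
        · intro b hb
          have hb0 : 0 < b := (hts_pos K0 hK0').trans hb
          obtain ⟨hKb1, hKb2⟩ := hKof b hb0
          have hK0Kb : K0 < b/(2*β*phi β b) := by
            rcases lt_trichotomy K0 (b/(2*β*phi β b)) with h | h | h
            · exact h
            · exfalso; rw [h, hKb2] at hb; exact lt_irrefl b hb
            · exfalso
              have := hts_mono _ K0 hKb1 h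
              rw [hKb2] at this
              linarith
          filter_upwards [mem_nhdsWithin_of_mem_nhds (Iio_mem_nhds hK0Kb),
            self_mem_nhdsWithin] with K hK1 hK2
          have := hts_mono K _ hK2 hK1
          rw [hKb2] at this
          exact this
      exact (phi_continuous β).comp_continuousOn hcts
    · -- limit
      have htts : Filter.Tendsto ts (nhdsWithin (Kc2 β) (Set.Ioi (Kc2 β))) (nhds 0) := by
        apply tendsto_order.2
        constructor
        · intro b hb
          filter_upwards [self_mem_nhdsWithin] with K hK
          exact hb.trans_le (hts_pos K hK).le
        · intro b hb
          obtain ⟨hKb1, hKb2⟩ := hKof b hb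
          filter_upwards [mem_nhdsWithin_of_mem_nhds (Iio_mem_nhds hKb1),
            self_mem_nhdsWithin] with K hK1 hK2
          have := hts_mono K _ hK2 hK1
          rw [hKb2] at this
          exact this
      have hphit : Filter.Tendsto (phi β) (nhds 0) (nhds 0) := by
        have := (phi_continuous β).tendsto 0
        rw [phi_zero] at this
        exact this
      exact hphit.comp htts
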